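/- Let A, B be d×d complex matrices, each a nonzero scalar multiple of a unitary. The projections onto the graphs {(x,Ax)} and {(x,Bx)} together with their complements form a strongly equiangular pair if and only if I + A†B is a nonzero scalar multiple of a unitary matrix. -/

import Mathlib

open Matrix

section Stmt11Aux

variable {m n : Type*} [Fintype m] [Fintype n] [DecidableEq n]

lemma stmt11_conj_cancel (G : Matrix m n ℂ) (a : ℂ) (ha : a ≠ 0)
    (hG : Gᴴ * G = a • 1) {X Y : Matrix n n ℂ} :
    G * X * Gᴴ = G * Y * Gᴴ ↔ X = Y := by
  constructor
  · intro h
    have e : ∀ Z : Matrix n n ℂ, Gᴴ * (G * Z * Gᴴ) * G = (a * a) • Z := by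
      intro Z
      have h1 : Gᴴ * (G * Z * Gᴴ) * G = (Gᴴ * G) * (Z * (Gᴴ * G)) := by
        simp only [Matrix.mul_assoc]
      rw [h1, hG]
      simp [Matrix.mul_smul, Matrix.smul_mul, smul_smul]
    have h2 : (a * a) • X = (a * a) • Y := by rw [← e X, ← e Y, h]
    exact smul_right_injective _ (mul_ne_zero ha ha) h2
  · intro h; rw [h]

lemma stmt11_equi (G H : Matrix m n ℂ) (a b : ℂ) (ha : a ≠ 0) (hb : b ≠ 0)
    (hG : Gᴴ * G = a • 1) (hH : Hᴴ * H = b • 1) (c : ℂ) :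
    (a⁻¹ • (G * Gᴴ)) * (b⁻¹ • (H * Hᴴ)) * (a⁻¹ • (G * Gᴴ)) = c • (a⁻¹ • (G * Gᴴ)) ↔
    (Gᴴ * H) * (Gᴴ * H)ᴴ = (c * a * b) • 1 := by
  have ht : a⁻¹ * b⁻¹ * a⁻¹ ≠ 0 := by
    simp [ha, hb]
  have e1 : (a⁻¹ • (G * Gᴴ)) * (b⁻¹ • (H * Hᴴ)) * (a⁻¹ • (G * Gᴴ))
      = (a⁻¹ * b⁻¹ * a⁻¹) • (G * ((Gᴴ * H) * (Gᴴ * H)ᴴ) * Gᴴ) := by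
    simp only [conjTranspose_mul, conjTranspose_conjTranspose, Matrix.smul_mul,
      Matrix.mul_smul, smul_smul, Matrix.mul_assoc]
    congr 1
    ring
  have e2 : c • (a⁻¹ • (G * Gᴴ))
      = (a⁻¹ * b⁻¹ * a⁻¹) • (G * ((c * a * b) • (1 : Matrix n n ℂ)) * Gᴴ) := by
    rw [Matrix.mul_smul, Matrix.mul_one, Matrix.smul_mul, smul_smul, smul_smul]
    congr 1
    field_simp
  rw [e1, e2]
  constructor
  · intro h
    have h' := smul_right_injective (Matrix m m ℂ) ht h
    exact (stmt11_conj_cancel G a ha hG).mp h'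
  · intro h; rw [h]

lemma stmt11_flip (M : Matrix n n ℂ) (t : ℂ) (ht : t ≠ 0)
    (h : M * Mᴴ = t • 1) : Mᴴ * M = t • 1 := by
  have h1 : M * (t⁻¹ • Mᴴ) = 1 := by
    rw [Matrix.mul_smul, h, smul_smul, inv_mul_cancel₀ ht, one_smul]
  have h2 := mul_eq_one_comm.mp h1
  calc Mᴴ * M = t • ((t⁻¹ • Mᴴ) * M) := by
        rw [Matrix.smul_mul, smul_smul, mul_inv_cancel₀ ht, one_smul]
    _ = t • 1 := by rw [h2]

end Stmt11Aux

/-- From `(1 + AᴴB)(1 + AᴴB)ᴴ = t•1` deduce `(1 + ABᴴ)(1 + ABᴴ)ᴴ = t•1`. -/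
lemma stmt11_transfer {d : ℕ} (A B : Matrix (Fin d) (Fin d) ℂ) (r t : ℂ)
    (hr : r ≠ 0) (ht : t ≠ 0) (hrr : star r = r)
    (hA : A * Aᴴ = r • 1) (hA' : Aᴴ * A = r • 1)
    (h : (1 + Aᴴ * B) * (1 + Aᴴ * B)ᴴ = t • 1) :
    (1 + A * Bᴴ) * (1 + A * Bᴴ)ᴴ = t • 1 := by
  set M : Matrix (Fin d) (Fin d) ℂ := 1 + Aᴴ * B with hM
  have hMH : Mᴴ = 1 + Bᴴ * A := by
    simp [hM, conjTranspose_add, conjTranspose_mul]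
  have hM' : Mᴴ * M = t • 1 := stmt11_flip M t ht h
  have key : A * Mᴴ * Aᴴ = r • (1 + A * Bᴴ) := by
    rw [hMH]
    have expand : A * (1 + Bᴴ * A) * Aᴴ = A * Aᴴ + A * Bᴴ * (A * Aᴴ) := by
      noncomm_ring
    rw [expand, hA, Matrix.mul_smul, Matrix.mul_one, smul_add]
  have key2 : (A * Mᴴ * Aᴴ) * (A * Mᴴ * Aᴴ)ᴴ = (r * r * t) • (1 : Matrix (Fin d) (Fin d) ℂ) := by
    have e : (A * Mᴴ * Aᴴ)ᴴ = A * M * Aᴴ := by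
      simp [conjTranspose_mul, Matrix.mul_assoc]
    rw [e]
    have e2 : (A * Mᴴ * Aᴴ) * (A * M * Aᴴ) = A * (Mᴴ * ((Aᴴ * A) * (M * Aᴴ))) := by
      simp only [Matrix.mul_assoc]
    rw [e2, hA']
    simp only [Matrix.smul_mul, Matrix.mul_smul, Matrix.one_mul]
    have e3 : A * (Mᴴ * (M * Aᴴ)) = A * ((Mᴴ * M) * Aᴴ) := by
      simp only [Matrix.mul_assoc]
    rw [e3, hM']
    simp only [Matrix.smul_mul, Matrix.mul_smul, Matrix.one_mul, hA, smul_smul]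
    congr 1
    ring
  have key3 : (r • (1 + A * Bᴴ)) * (r • (1 + A * Bᴴ))ᴴ
      = (r * r) • ((1 + A * Bᴴ) * (1 + A * Bᴴ)ᴴ) := by
    rw [conjTranspose_smul, Matrix.smul_mul, Matrix.mul_smul, smul_smul, hrr]
  have final : (r * r) • ((1 + A * Bᴴ) * (1 + A * Bᴴ)ᴴ)
      = (r * r) • ((t • 1 : Matrix (Fin d) (Fin d) ℂ)) := by
    rw [← key3, ← key, key2, smul_smul]
  exact smul_right_injective _ (mul_ne_zero hr hr) final

theorem stmt_11 {d : ℕ} (A B : Matrix (Fin d) (Fin d) ℂ)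
    (rA rB : ℝ) (hrA : 0 < rA) (hrB : 0 < rB)
    (hA : A * Aᴴ = ((rA : ℂ)^2) • 1) (hB : B * Bᴴ = ((rB : ℂ)^2) • 1)
    (PA PB : Matrix (Fin d ⊕ Fin d) (Fin d ⊕ Fin d) ℂ)
    (hPA : PA = Matrix.fromBlocks
      ((1 + (rA : ℂ)^2)⁻¹ • 1) ((1 + (rA : ℂ)^2)⁻¹ • Aᴴ)
      ((1 + (rA : ℂ)^2)⁻¹ • A) (((rA : ℂ)^2 * (1 + (rA : ℂ)^2)⁻¹) • 1))
    (hPB : PB = Matrix.fromBlocks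
      ((1 + (rB : ℂ)^2)⁻¹ • 1) ((1 + (rB : ℂ)^2)⁻¹ • Bᴴ)
      ((1 + (rB : ℂ)^2)⁻¹ • B) (((rB : ℂ)^2 * (1 + (rB : ℂ)^2)⁻¹) • 1)) :
    ((∃ α : ℝ, 0 < α ∧
        PA * PB * PA = ((α : ℂ)^2) • PA ∧ PB * PA * PB = ((α : ℂ)^2) • PB) ∧
     (∃ γ : ℝ, 0 < γ ∧
        (1 - PA) * (1 - PB) * (1 - PA) = ((γ : ℂ)^2) • (1 - PA) ∧
        (1 - PB) * (1 - PA) * (1 - PB) = ((γ : ℂ)^2) • (1 - PB))) ↔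
    (∃ s : ℝ, 0 < s ∧
      (1 + Aᴴ * B) * (1 + Aᴴ * B)ᴴ = ((s : ℂ)^2) • 1) := by
  -- make Aᴴ*A and Bᴴ*B scalar too
  have hrA2 : ((rA : ℂ)^2) ≠ 0 :=
    pow_ne_zero 2 (Complex.ofReal_ne_zero.mpr (ne_of_gt hrA))
  have hrB2 : ((rB : ℂ)^2) ≠ 0 :=
    pow_ne_zero 2 (Complex.ofReal_ne_zero.mpr (ne_of_gt hrB))
  have flipAB : ∀ (C : Matrix (Fin d) (Fin d) ℂ) (r : ℂ), r ≠ 0 →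
      C * Cᴴ = r • 1 → Cᴴ * C = r • 1 := by
    intro C r hr hC
    have h1 : C * (r⁻¹ • Cᴴ) = 1 := by
      rw [Matrix.mul_smul, hC, smul_smul, inv_mul_cancel₀ hr, one_smul]
    have h2 := mul_eq_one_comm.mp h1
    calc Cᴴ * C = r • ((r⁻¹ • Cᴴ) * C) := by
          rw [Matrix.smul_mul, smul_smul, mul_inv_cancel₀ hr, one_smul]
      _ = r • 1 := by rw [h2]
  have hA' : Aᴴ * A = ((rA : ℂ)^2) • 1 := flipAB A _ hrA2 hA
  have hB' : Bᴴ * B = ((rB : ℂ)^2) • 1 := flipAB B _ hrB2 hB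
  set a : ℂ := 1 + (rA : ℂ)^2 with ha_def
  set b : ℂ := 1 + (rB : ℂ)^2 with hb_def
  have hacast : a = ((1 + rA^2 : ℝ) : ℂ) := by rw [ha_def]; push_cast; ring
  have hbcast : b = ((1 + rB^2 : ℝ) : ℂ) := by rw [hb_def]; push_cast; ring
  have ha : a ≠ 0 := by
    rw [hacast]
    exact_mod_cast ne_of_gt (by positivity : (0:ℝ) < 1 + rA^2)
  have hb : b ≠ 0 := by
    rw [hbcast]
    exact_mod_cast ne_of_gt (by positivity : (0:ℝ) < 1 + rB^2)
  -- the graph factorizations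
  set GA : Matrix (Fin d ⊕ Fin d) (Fin d) ℂ := fromRows 1 A with hGA_def
  set GB : Matrix (Fin d ⊕ Fin d) (Fin d) ℂ := fromRows 1 B with hGB_def
  set HA : Matrix (Fin d ⊕ Fin d) (Fin d) ℂ := fromRows (-Aᴴ) 1 with hHA_def
  set HB : Matrix (Fin d ⊕ Fin d) (Fin d) ℂ := fromRows (-Bᴴ) 1 with hHB_def
  have hGAH : GAᴴ = fromCols 1 Aᴴ := by
    rw [hGA_def, conjTranspose_fromRows_eq_fromCols_conjTranspose, conjTranspose_one]
  have hGBH : GBᴴ = fromCols 1 Bᴴ := by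
    rw [hGB_def, conjTranspose_fromRows_eq_fromCols_conjTranspose, conjTranspose_one]
  have hHAH : HAᴴ = fromCols (-A) 1 := by
    rw [hHA_def, conjTranspose_fromRows_eq_fromCols_conjTranspose, conjTranspose_neg,
      conjTranspose_conjTranspose, conjTranspose_one]
  have hHBH : HBᴴ = fromCols (-B) 1 := by
    rw [hHB_def, conjTranspose_fromRows_eq_fromCols_conjTranspose, conjTranspose_neg,
      conjTranspose_conjTranspose, conjTranspose_one]
  have hone : ∀ r : ℂ, (1 : Matrix (Fin d) (Fin d) ℂ) + r • 1 = (1 + r) • 1 := by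
    intro r; rw [add_smul, one_smul]
  have hGAc : GAᴴ * GA = a • 1 := by
    rw [hGAH, hGA_def, fromCols_mul_fromRows, Matrix.one_mul, hA', hone]
  have hGBc : GBᴴ * GB = b • 1 := by
    rw [hGBH, hGB_def, fromCols_mul_fromRows, Matrix.one_mul, hB', hone]
  have hHAc : HAᴴ * HA = a • 1 := by
    rw [hHAH, hHA_def, fromCols_mul_fromRows, Matrix.mul_one, Matrix.neg_mul,
      Matrix.mul_neg, neg_neg, hA, add_comm, hone]
  have hHBc : HBᴴ * HB = b • 1 := by
    rw [hHBH, hHB_def, fromCols_mul_fromRows, Matrix.mul_one, Matrix.neg_mul,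
      Matrix.mul_neg, neg_neg, hB, add_comm, hone]
  have hGG : GA * GAᴴ = fromBlocks 1 Aᴴ A (((rA:ℂ)^2) • 1) := by
    rw [hGA_def, hGAH, fromRows_mul_fromCols, Matrix.one_mul, Matrix.one_mul,
      Matrix.mul_one, hA]
  have hHH : HA * HAᴴ = fromBlocks (((rA:ℂ)^2) • 1) (-Aᴴ) (-A) 1 := by
    rw [hHA_def, hHAH, fromRows_mul_fromCols, Matrix.one_mul, Matrix.one_mul,
      Matrix.mul_one, Matrix.neg_mul, Matrix.mul_neg, neg_neg, hA']
  have hPA' : PA = a⁻¹ • (GA * GAᴴ) := by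
    rw [hPA, hGG, fromBlocks_smul, smul_smul, mul_comm]
  have hPB' : PB = b⁻¹ • (GB * GBᴴ) := by
    have hGGB : GB * GBᴴ = fromBlocks 1 Bᴴ B (((rB:ℂ)^2) • 1) := by
      rw [hGB_def, hGBH, fromRows_mul_fromCols, Matrix.one_mul, Matrix.one_mul,
        Matrix.mul_one, hB]
    rw [hPB, hGGB, fromBlocks_smul, smul_smul, mul_comm]
  -- complements
  have hsumA : GA * GAᴴ + HA * HAᴴ = a • 1 := by
    rw [hGG, hHH, fromBlocks_add, ← fromBlocks_one, fromBlocks_smul]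
    refine fromBlocks_inj.mpr ⟨?_, ?_, ?_, ?_⟩
    · exact hone _
    · simp
    · simp
    · rw [add_comm]; exact hone _
  have hQA : (1 : Matrix (Fin d ⊕ Fin d) (Fin d ⊕ Fin d) ℂ) - PA = a⁻¹ • (HA * HAᴴ) := by
    rw [hPA', sub_eq_iff_eq_add, ← smul_add, add_comm, hsumA, smul_smul,
      inv_mul_cancel₀ ha, one_smul]
  have hsumB : GB * GBᴴ + HB * HBᴴ = b • 1 := by
    have hGGB : GB * GBᴴ = fromBlocks 1 Bᴴ B (((rB:ℂ)^2) • 1) := by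
      rw [hGB_def, hGBH, fromRows_mul_fromCols, Matrix.one_mul, Matrix.one_mul,
        Matrix.mul_one, hB]
    have hHHB : HB * HBᴴ = fromBlocks (((rB:ℂ)^2) • 1) (-Bᴴ) (-B) 1 := by
      rw [hHB_def, hHBH, fromRows_mul_fromCols, Matrix.one_mul, Matrix.one_mul,
        Matrix.mul_one, Matrix.neg_mul, Matrix.mul_neg, neg_neg, hB']
    rw [hGGB, hHHB, fromBlocks_add, ← fromBlocks_one, fromBlocks_smul]
    refine fromBlocks_inj.mpr ⟨?_, ?_, ?_, ?_⟩
    · exact hone _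
    · simp
    · simp
    · rw [add_comm]; exact hone _
  have hQB : (1 : Matrix (Fin d ⊕ Fin d) (Fin d ⊕ Fin d) ℂ) - PB = b⁻¹ • (HB * HBᴴ) := by
    rw [hPB', sub_eq_iff_eq_add, ← smul_add, add_comm, hsumB, smul_smul,
      inv_mul_cancel₀ hb, one_smul]
  -- cross products
  have hGAB : GAᴴ * GB = 1 + Aᴴ * B := by
    rw [hGAH, hGB_def, fromCols_mul_fromRows, Matrix.one_mul]
  have hGBA : GBᴴ * GA = 1 + Bᴴ * A := by
    rw [hGBH, hGA_def, fromCols_mul_fromRows, Matrix.one_mul]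
  have hHAB : HAᴴ * HB = 1 + A * Bᴴ := by
    rw [hHAH, hHB_def, fromCols_mul_fromRows, Matrix.mul_one, Matrix.neg_mul,
      Matrix.mul_neg, neg_neg, add_comm]
  have hHBA : HBᴴ * HA = 1 + B * Aᴴ := by
    rw [hHBH, hHA_def, fromCols_mul_fromRows, Matrix.mul_one, Matrix.neg_mul,
      Matrix.mul_neg, neg_neg, add_comm]
  -- the four characterizations
  have iff1 : ∀ c : ℂ, (PA * PB * PA = c • PA ↔
      (1 + Aᴴ * B) * (1 + Aᴴ * B)ᴴ = (c * a * b) • 1) := by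
    intro c
    rw [hPA', hPB', ← hGAB]
    exact stmt11_equi GA GB a b ha hb hGAc hGBc c
  have iff2 : ∀ c : ℂ, (PB * PA * PB = c • PB ↔
      (1 + Bᴴ * A) * (1 + Bᴴ * A)ᴴ = (c * b * a) • 1) := by
    intro c
    rw [hPA', hPB', ← hGBA]
    exact stmt11_equi GB GA b a hb ha hGBc hGAc c
  have iff3 : ∀ c : ℂ, ((1 - PA) * (1 - PB) * (1 - PA) = c • (1 - PA) ↔
      (1 + A * Bᴴ) * (1 + A * Bᴴ)ᴴ = (c * a * b) • 1) := by
    intro c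
    rw [hQA, hQB, ← hHAB]
    exact stmt11_equi HA HB a b ha hb hHAc hHBc c
  have iff4 : ∀ c : ℂ, ((1 - PB) * (1 - PA) * (1 - PB) = c • (1 - PB) ↔
      (1 + B * Aᴴ) * (1 + B * Aᴴ)ᴴ = (c * b * a) • 1) := by
    intro c
    rw [hQA, hQB, ← hHBA]
    exact stmt11_equi HB HA b a hb ha hHBc hHAc c
  constructor
  · rintro ⟨⟨α, hα, h1, -⟩, -⟩
    have hMM := (iff1 ((α:ℂ)^2)).mp h1
    refine ⟨α * Real.sqrt ((1 + rA^2) * (1 + rB^2)), by positivity, ?_⟩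
    have hsc : ((↑(α * Real.sqrt ((1 + rA^2) * (1 + rB^2))) : ℂ))^2
        = (α:ℂ)^2 * a * b := by
      have hre : (α * Real.sqrt ((1 + rA^2) * (1 + rB^2)))^2
          = α^2 * ((1 + rA^2) * (1 + rB^2)) := by
        rw [mul_pow, Real.sq_sqrt (by positivity)]
      rw [hacast, hbcast, ← Complex.ofReal_pow, hre]
      push_cast
      ring
    rw [hsc]
    exact hMM
  · rintro ⟨s, hs, hM⟩
    have hx0 : (0:ℝ) < (1 + rA^2) * (1 + rB^2) := by positivity
    set α : ℝ := s / Real.sqrt ((1 + rA^2) * (1 + rB^2)) with hα_def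
    have hα : 0 < α := by
      rw [hα_def]; positivity
    have hcab : (α:ℂ)^2 * a * b = (s:ℂ)^2 := by
      have hre : α^2 * ((1 + rA^2) * (1 + rB^2)) = s^2 := by
        rw [hα_def, div_pow, Real.sq_sqrt hx0.le, div_mul_cancel₀ _ (ne_of_gt hx0)]
      rw [hacast, hbcast, show ((s:ℂ))^2 = ((s^2 : ℝ) : ℂ) by push_cast; ring, ← hre]
      push_cast
      ring
    have hs2 : ((s:ℂ)^2) ≠ 0 :=
      pow_ne_zero 2 (Complex.ofReal_ne_zero.mpr (ne_of_gt hs))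
    have hstar : star ((rA:ℂ)^2) = (rA:ℂ)^2 := by
      rw [star_pow]
      simp [Complex.star_def, Complex.conj_ofReal]
    have hMH : (1 + Aᴴ * B)ᴴ = 1 + Bᴴ * A := by
      simp [conjTranspose_add, conjTranspose_mul]
    have hM' : (1 + Bᴴ * A) * (1 + Bᴴ * A)ᴴ = ((s:ℂ)^2) • 1 := by
      rw [← hMH, conjTranspose_conjTranspose]
      exact stmt11_flip _ _ hs2 hM
    have hN : (1 + A * Bᴴ) * (1 + A * Bᴴ)ᴴ = ((s:ℂ)^2) • 1 :=
      stmt11_transfer A B _ _ hrA2 hs2 hstar hA hA' hM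
    have hNH : (1 + A * Bᴴ)ᴴ = 1 + B * Aᴴ := by
      simp [conjTranspose_add, conjTranspose_mul]
    have hN' : (1 + B * Aᴴ) * (1 + B * Aᴴ)ᴴ = ((s:ℂ)^2) • 1 := by
      rw [← hNH, conjTranspose_conjTranspose]
      exact stmt11_flip _ _ hs2 hN
    refine ⟨⟨α, hα, ?_, ?_⟩, ⟨α, hα, ?_, ?_⟩⟩
    · exact (iff1 _).mpr (by rw [hcab]; exact hM)
    · refine (iff2 _).mpr ?_
      rw [show (α:ℂ)^2 * b * a = (α:ℂ)^2 * a * b by ring, hcab]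
      exact hM'
    · exact (iff3 _).mpr (by rw [hcab]; exact hN)
    · refine (iff4 _).mpr ?_
      rw [show (α:ℂ)^2 * b * a = (α:ℂ)^2 * a * b by ring, hcab]
      exact hN'
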